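/- For all positive reals a and b, P4 + P6 − S ≤ (P6 + 2·P4)/3, equivalently 3·S ≥ 2·P6 + P4, where P4 = 4ab/(√a+√b)², P6 = (a²+b²)/(a+b), and S = √((a²+b²)/2). -/

import Mathlib

theorem stmt_3 (a b : ℝ) (ha : 0 < a) (hb : 0 < b) :
    let P4 := 4*a*b/(Real.sqrt a + Real.sqrt b)^2
    let P6 := (a^2+b^2)/(a+b)
    let S := Real.sqrt ((a^2+b^2)/2)
    P4 + P6 - S ≤ (P6 + 2*P4)/3 := by
  intro P4 P6 S
  show 4*a*b/(Real.sqrt a + Real.sqrt b)^2 + (a^2+b^2)/(a+b)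
      - Real.sqrt ((a^2+b^2)/2)
      ≤ ((a^2+b^2)/(a+b) + 2*(4*a*b/(Real.sqrt a + Real.sqrt b)^2))/3
  set s := Real.sqrt a with hsdef
  set t := Real.sqrt b with htdef
  have hs0 : 0 < s := Real.sqrt_pos.mpr ha
  have ht0 : 0 < t := Real.sqrt_pos.mpr hb
  have hs2 : s^2 = a := Real.sq_sqrt ha.le
  have ht2 : t^2 = b := Real.sq_sqrt hb.le
  have key : (4*a*b/(s+t)^2 + 2*((a^2+b^2)/(a+b)))/3 ≤ Real.sqrt ((a^2+b^2)/2) := by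
    rw [Real.le_sqrt (by positivity) (by positivity)]
    rw [← hs2, ← ht2]
    have hX : (4*(s^2)*(t^2)/(s+t)^2 + 2*(((s^2)^2+(t^2)^2)/(s^2+t^2)))/3
        = (4*s^2*t^2*(s^2+t^2) + 2*(s^4+t^4)*(s+t)^2) / (3*((s+t)^2*(s^2+t^2))) := by
      field_simp
    rw [hX, div_pow, div_le_div_iff₀ (by positivity) (by norm_num : (0:ℝ) < 2)]
    have hId : 9*((s^2)^2+(t^2)^2)*((s+t)^2*(s^2+t^2))^2
        - (4*s^2*t^2*(s^2+t^2) + 2*(s^4+t^4)*(s+t)^2)^2 * 2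
        = (s-t)^2 * (s^10 + 6*s^9*t + 3*s^8*t^2 + 12*s^7*t^3 + 36*s^6*t^4
            + 76*s^5*t^5 + 36*s^4*t^6 + 12*s^3*t^7 + 3*s^2*t^8 + 6*s*t^9 + t^10) := by
      ring
    nlinarith [hId, mul_nonneg (sq_nonneg (s-t))
      (by positivity : (0:ℝ) ≤ s^10 + 6*s^9*t + 3*s^8*t^2 + 12*s^7*t^3 + 36*s^6*t^4
            + 76*s^5*t^5 + 36*s^4*t^6 + 12*s^3*t^7 + 3*s^2*t^8 + 6*s*t^9 + t^10)]
  linarith [key]
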